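/- Schur's Test: Let k : ℝⁿ × ℝⁿ → ℂ be measurable and suppose there are constants C₁, C₂ < ∞ with sup_{x∈ℝⁿ} ∫_{ℝⁿ} |k(x,y)| dy ≤ C₁ and sup_{y∈ℝⁿ} ∫_{ℝⁿ} |k(x,y)| dx ≤ C₂. Then for every u ∈ L²(ℝⁿ) the integral (Ku)(x) := ∫_{ℝⁿ} k(x,y) u(y) dy converges absolutely for almost every x, Ku ∈ L²(ℝⁿ), and ‖Ku‖_{L²} ≤ √(C₁C₂) · ‖u‖_{L²}. -/

import Mathlib

open MeasureTheory
open scoped ENNReal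

private lemma cs_aux {α : Type*} [MeasurableSpace α] {μ : Measure α}
    {f w : α → ℝ≥0∞} (hf : AEMeasurable f μ) (hw : AEMeasurable w μ) :
    (∫⁻ a, f a * w a ∂μ) ^ (2:ℝ) ≤ (∫⁻ a, f a ∂μ) * ∫⁻ a, f a * w a ^ (2:ℝ) ∂μ := by
  have hconj : Real.HolderConjugate 2 2 := by constructor <;> norm_num
  have h := ENNReal.lintegral_mul_le_Lp_mul_Lq μ hconj
    (f := fun a => f a ^ (1/2 : ℝ)) (g := fun a => f a ^ (1/2 : ℝ) * w a)
    (hf.pow_const _) ((hf.pow_const _).mul hw)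
  have e1 : ∀ a, f a ^ (1/2:ℝ) * (f a ^ (1/2:ℝ) * w a) = f a * w a := by
    intro a
    rw [← mul_assoc, ← ENNReal.rpow_add_of_nonneg _ _ (by norm_num) (by norm_num)]
    norm_num
  have e2 : ∀ a, (f a ^ (1/2:ℝ)) ^ (2:ℝ) = f a := by
    intro a
    rw [← ENNReal.rpow_mul]; norm_num
  have e3 : ∀ a, (f a ^ (1/2:ℝ) * w a) ^ (2:ℝ) = f a * w a ^ (2:ℝ) := by
    intro a
    rw [ENNReal.mul_rpow_of_nonneg _ _ (by norm_num : (0:ℝ) ≤ 2), e2]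
  simp only [Pi.mul_apply, e1, e2, e3] at h
  calc (∫⁻ a, f a * w a ∂μ) ^ (2:ℝ)
      ≤ ((∫⁻ a, f a ∂μ) ^ (1/(2:ℝ)) * (∫⁻ a, f a * w a ^ (2:ℝ) ∂μ) ^ (1/(2:ℝ))) ^ (2:ℝ) :=
        ENNReal.rpow_le_rpow h (by norm_num)
    _ = (∫⁻ a, f a ∂μ) * ∫⁻ a, f a * w a ^ (2:ℝ) ∂μ := by
        rw [ENNReal.mul_rpow_of_nonneg _ _ (by norm_num : (0:ℝ) ≤ 2),
          ← ENNReal.rpow_mul, ← ENNReal.rpow_mul]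
        norm_num

theorem schur_test (n : ℕ) (k : EuclideanSpace ℝ (Fin n) → EuclideanSpace ℝ (Fin n) → ℂ)
    (hk : Measurable (Function.uncurry k)) (C₁ C₂ : ℝ)
    (h₁ : ∀ x, ∫⁻ y, (‖k x y‖₊ : ℝ≥0∞) ≤ ENNReal.ofReal C₁)
    (h₂ : ∀ y, ∫⁻ x, (‖k x y‖₊ : ℝ≥0∞) ≤ ENNReal.ofReal C₂) :
    ∀ u : EuclideanSpace ℝ (Fin n) → ℂ, MemLp u 2 volume →
      (∀ᵐ x, Integrable (fun y => k x y * u y) volume) ∧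
      MemLp (fun x => ∫ y, k x y * u y) 2 volume ∧
      eLpNorm (fun x => ∫ y, k x y * u y) 2 volume ≤
        ENNReal.ofReal (Real.sqrt (C₁ * C₂)) * eLpNorm u 2 volume := by
  intro u hu
  set g : EuclideanSpace ℝ (Fin n) → ℂ := hu.1.mk u with hgdef
  have hg : StronglyMeasurable g := hu.1.stronglyMeasurable_mk
  have hug : u =ᵐ[volume] g := hu.1.ae_eq_mk
  set G : EuclideanSpace ℝ (Fin n) → ℝ≥0∞ := fun y => (‖g y‖₊ : ℝ≥0∞) with hGdef
  have hGm : Measurable G := hg.measurable.nnnorm.coe_nnreal_ennreal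
  have hK : Measurable fun p : EuclideanSpace ℝ (Fin n) × EuclideanSpace ℝ (Fin n) =>
      (‖k p.1 p.2‖₊ : ℝ≥0∞) := hk.nnnorm.coe_nnreal_ennreal
  have hkx : ∀ x, Measurable fun y => (‖k x y‖₊ : ℝ≥0∞) := fun x =>
    (hk.comp (measurable_prodMk_left)).nnnorm.coe_nnreal_ennreal
  set I : EuclideanSpace ℝ (Fin n) → ℝ≥0∞ :=
    fun x => ∫⁻ y, (‖k x y‖₊ : ℝ≥0∞) * G y with hIdef
  -- pointwise Cauchy-Schwarz
  have hCS : ∀ x, I x ^ (2:ℝ) ≤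
      ENNReal.ofReal C₁ * ∫⁻ y, (‖k x y‖₊ : ℝ≥0∞) * G y ^ (2:ℝ) := by
    intro x
    refine le_trans (cs_aux (hkx x).aemeasurable hGm.aemeasurable) ?_
    exact mul_le_mul_left (h₁ x) _
  -- Tonelli
  have hswap : ∫⁻ x, ∫⁻ y, (‖k x y‖₊ : ℝ≥0∞) * G y ^ (2:ℝ) =
      ∫⁻ y, ∫⁻ x, (‖k x y‖₊ : ℝ≥0∞) * G y ^ (2:ℝ) := by
    apply lintegral_lintegral_swap
    exact (hK.mul ((hGm.comp measurable_snd).pow_const _)).aemeasurable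
  have hinner : ∀ y, (∫⁻ x, (‖k x y‖₊ : ℝ≥0∞) * G y ^ (2:ℝ)) ≤
      ENNReal.ofReal C₂ * G y ^ (2:ℝ) := by
    intro y
    rw [lintegral_mul_const' _ _ (by simp [hGdef, ENNReal.rpow_natCast])]
    exact mul_le_mul_left (h₂ y) _
  have hB : (∫⁻ x, I x ^ (2:ℝ)) ≤
      ENNReal.ofReal C₁ * ENNReal.ofReal C₂ * ∫⁻ y, G y ^ (2:ℝ) := by
    calc (∫⁻ x, I x ^ (2:ℝ))
        ≤ ∫⁻ x, ENNReal.ofReal C₁ * ∫⁻ y, (‖k x y‖₊ : ℝ≥0∞) * G y ^ (2:ℝ) :=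
          lintegral_mono hCS
      _ = ENNReal.ofReal C₁ * ∫⁻ x, ∫⁻ y, (‖k x y‖₊ : ℝ≥0∞) * G y ^ (2:ℝ) :=
          lintegral_const_mul' _ _ ENNReal.ofReal_ne_top
      _ = ENNReal.ofReal C₁ * ∫⁻ y, ∫⁻ x, (‖k x y‖₊ : ℝ≥0∞) * G y ^ (2:ℝ) := by rw [hswap]
      _ ≤ ENNReal.ofReal C₁ * ∫⁻ y, ENNReal.ofReal C₂ * G y ^ (2:ℝ) :=
          mul_le_mul_right (lintegral_mono hinner) _
      _ = ENNReal.ofReal C₁ * (ENNReal.ofReal C₂ * ∫⁻ y, G y ^ (2:ℝ)) := by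
          rw [lintegral_const_mul' _ _ ENNReal.ofReal_ne_top]
      _ = ENNReal.ofReal C₁ * ENNReal.ofReal C₂ * ∫⁻ y, G y ^ (2:ℝ) := by ring
  -- finiteness of ∫ G²
  have hGu : (∫⁻ y, G y ^ (2:ℝ)) = ∫⁻ y, (‖u y‖₊ : ℝ≥0∞) ^ (2:ℝ) := by
    refine lintegral_congr_ae (hug.mono fun y hy => ?_)
    simp [hGdef, hy]
  have hu2 : (∫⁻ y, (‖u y‖₊ : ℝ≥0∞) ^ (2:ℝ)) < ⊤ := by
    have := hu.2
    rw [eLpNorm_eq_lintegral_rpow_enorm_toReal (by norm_num) (by norm_num)] at this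
    exact (by simpa using (ENNReal.rpow_lt_top_iff_of_pos (by norm_num : (0:ℝ) < 1/(2:ℝ≥0∞).toReal)).mp this :
      ∫⁻ y, ‖u y‖ₑ ^ (2:ℝ) < ⊤)
  have hGfin : (∫⁻ y, G y ^ (2:ℝ)) < ⊤ := hGu ▸ hu2
  have hItop : (∫⁻ x, I x ^ (2:ℝ)) < ⊤ :=
    lt_of_le_of_lt hB (ENNReal.mul_lt_top (ENNReal.mul_lt_top ENNReal.ofReal_lt_top
      ENNReal.ofReal_lt_top) hGfin)
  have hIm : Measurable I :=
    (hK.mul (hGm.comp measurable_snd)).lintegral_prod_right'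
  have hIae : ∀ᵐ x, I x < ⊤ := by
    filter_upwards [ae_lt_top (hIm.pow_const (2:ℝ)) hItop.ne] with x hx
    exact (ENNReal.rpow_lt_top_iff_of_pos (by norm_num : (0:ℝ) < 2)).mp hx
  -- the nnnorm-lintegral of the integrand equals I x
  have hnorm_eq : ∀ x, (∫⁻ y, (‖k x y * u y‖₊ : ℝ≥0∞)) = I x := by
    intro x
    refine lintegral_congr_ae (hug.mono fun y hy => ?_)
    simp [hIdef, hGdef, hy, nnnorm_mul, ENNReal.coe_mul]
  have haeint : ∀ᵐ x, Integrable (fun y => k x y * u y) volume := by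
    filter_upwards [hIae] with x hx
    refine ⟨((hk.comp measurable_prodMk_left).aestronglyMeasurable).mul hu.1, ?_⟩
    rw [HasFiniteIntegral]
    exact (hnorm_eq x).trans_lt hx
  -- the main norm estimate
  set F : EuclideanSpace ℝ (Fin n) → ℂ := fun x => ∫ y, k x y * u y with hFdef
  have hFeq : F = fun x => ∫ y, k x y * g y := by
    funext x
    exact integral_congr_ae (hug.mono fun y hy => by simp only [hy])
  have hFm : AEStronglyMeasurable F volume := by
    rw [hFeq]
    exact (StronglyMeasurable.integral_prod_right'
      (f := fun p : EuclideanSpace ℝ (Fin n) × EuclideanSpace ℝ (Fin n) => k p.1 p.2 * g p.2)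
      (hk.stronglyMeasurable.mul (hg.comp_measurable measurable_snd))).aestronglyMeasurable
  have hFle : ∀ x, (‖F x‖₊ : ℝ≥0∞) ≤ I x := fun x =>
    (enorm_integral_le_lintegral_enorm _).trans_eq (hnorm_eq x)
  have hFbound : eLpNorm F 2 volume ≤
      (ENNReal.ofReal C₁ * ENNReal.ofReal C₂) ^ (1/2:ℝ) * eLpNorm u 2 volume := by
    rw [eLpNorm_eq_lintegral_rpow_enorm_toReal (by norm_num) (by norm_num),
      eLpNorm_eq_lintegral_rpow_enorm_toReal (p := 2) (by norm_num) (by norm_num)]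
    simp only [ENNReal.toReal_ofNat]
    calc (∫⁻ x, (‖F x‖₊ : ℝ≥0∞) ^ (2:ℝ)) ^ (1/(2:ℝ))
        ≤ (∫⁻ x, I x ^ (2:ℝ)) ^ (1/(2:ℝ)) := by
          apply ENNReal.rpow_le_rpow _ (by norm_num)
          exact lintegral_mono fun x => ENNReal.rpow_le_rpow (hFle x) (by norm_num)
      _ ≤ (ENNReal.ofReal C₁ * ENNReal.ofReal C₂ * ∫⁻ y, G y ^ (2:ℝ)) ^ (1/(2:ℝ)) :=
          ENNReal.rpow_le_rpow hB (by norm_num)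
      _ = (ENNReal.ofReal C₁ * ENNReal.ofReal C₂) ^ (1/2:ℝ) *
            (∫⁻ x, (‖u x‖₊ : ℝ≥0∞) ^ (2:ℝ)) ^ (1/(2:ℝ)) := by
          rw [ENNReal.mul_rpow_of_nonneg _ _ (by norm_num : (0:ℝ) ≤ 1/2), hGu]
  have hconst : (ENNReal.ofReal C₁ * ENNReal.ofReal C₂) ^ (1/2:ℝ) ≤
      ENNReal.ofReal (Real.sqrt (C₁ * C₂)) := by
    rcases le_or_gt 0 C₁ with hC₁ | hC₁
    · rcases le_or_gt 0 C₂ with hC₂ | hC₂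
      · rw [← ENNReal.ofReal_mul hC₁,
          ENNReal.ofReal_rpow_of_nonneg (mul_nonneg hC₁ hC₂) (by norm_num),
          Real.sqrt_eq_rpow]
      · simp [ENNReal.ofReal_of_nonpos hC₂.le, ENNReal.zero_rpow_of_pos
          (by norm_num : (0:ℝ) < 1/2)]
    · simp [ENNReal.ofReal_of_nonpos hC₁.le, ENNReal.zero_rpow_of_pos
        (by norm_num : (0:ℝ) < 1/2)]
  have hfinal : eLpNorm F 2 volume ≤
      ENNReal.ofReal (Real.sqrt (C₁ * C₂)) * eLpNorm u 2 volume :=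
    hFbound.trans (mul_le_mul_left hconst _)
  exact ⟨haeint, ⟨hFm, lt_of_le_of_lt hfinal
    (ENNReal.mul_lt_top ENNReal.ofReal_lt_top hu.2)⟩, hfinal⟩
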